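/- Let R be a commutative noetherian ring equipped with a Z-grading, and let A be an R-Hopf algebra which is flat as an R-module and carries a Z-grading compatible with that of R, for which all structure maps (multiplication, unit, comultiplication, counit, antipode) are homogeneous of degree 0. Let M and M' be Z-graded A-comodules which are finitely generated as R-modules. Then the map ⊕_{n∈Z} Hom_{graded A-comod}(M, M'(n)) → Hom_{A-comod}(M, M') induced by forgetting the gradings is an isomorphism of abelian groups. -/

import Mathlib

open TensorProduct

section Defs

variable (R : Type*) [CommRing R]

/-- `ρ : M →ₗ[R] M ⊗[R] A` is a comodule coaction over the coalgebra `A` if it is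
coassociative and counital. -/
def IsComoduleCoaction {A : Type*} [AddCommMonoid A] [Module R A] [CoalgebraStruct R A]
    {M : Type*} [AddCommMonoid M] [Module R M] (ρ : M →ₗ[R] M ⊗[R] A) : Prop :=
  ((TensorProduct.assoc R M A A).toLinearMap.comp
      ((TensorProduct.map ρ (LinearMap.id : A →ₗ[R] A)).comp ρ) =
    (TensorProduct.map (LinearMap.id : M →ₗ[R] M) (Coalgebra.comul (R := R))).comp ρ) ∧
  ((TensorProduct.rid R M).toLinearMap.comp
      ((TensorProduct.map (LinearMap.id : M →ₗ[R] M) (Coalgebra.counit (R := R))).comp ρ) =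
    LinearMap.id)

/-- A linear map `f : M →ₗ[R] N` is a morphism of comodules (for coactions `ρM`, `ρN`)
if `(f ⊗ id) ∘ ρM = ρN ∘ f`. -/
def IsComodMap {A M N : Type*} [AddCommMonoid A] [Module R A]
    [AddCommMonoid M] [Module R M] [AddCommMonoid N] [Module R N]
    (ρM : M →ₗ[R] M ⊗[R] A) (ρN : N →ₗ[R] N ⊗[R] A) (f : M →ₗ[R] N) : Prop :=
  (TensorProduct.map f (LinearMap.id : A →ₗ[R] A)).comp ρM = ρN.comp f

/-- The additive subgroup of `M ⊗[R] A` generated by the pure tensors `x ⊗ y` with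
`x ∈ P` and `y ∈ Q`: the `(P, Q)`-graded piece of a tensor product of graded modules. -/
noncomputable def tensorPiece {M A : Type*} [AddCommGroup M] [Module R M] [AddCommGroup A] [Module R A]
    (P : AddSubgroup M) (Q : AddSubgroup A) : AddSubgroup (M ⊗[R] A) :=
  AddSubgroup.closure {z : M ⊗[R] A | ∃ x ∈ P, ∃ y ∈ Q, z = x ⊗ₜ[R] y}

/-- The additive group of comodule morphisms `M → M'` that are homogeneous of degree `n`
for gradings `ℳ`, `ℳ'`; equivalently, degree-`0` morphisms of graded comodules
`M → M'(n)` where `(n)` denotes the grading shift. -/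
noncomputable def homogComodHom {A M M' : Type*} [AddCommGroup A] [Module R A]
    [AddCommGroup M] [Module R M] [AddCommGroup M'] [Module R M']
    (ρM : M →ₗ[R] M ⊗[R] A) (ρM' : M' →ₗ[R] M' ⊗[R] A)
    (ℳ : ℤ → AddSubgroup M) (ℳ' : ℤ → AddSubgroup M') (n : ℤ) :
    AddSubgroup (M →ₗ[R] M') where
  carrier := {f | IsComodMap R ρM ρM' f ∧ ∀ i : ℤ, ∀ x ∈ ℳ i, f x ∈ ℳ' (i + n)}
  zero_mem' := by
    constructor
    · show (TensorProduct.map 0 (LinearMap.id : A →ₗ[R] A)).comp ρM = ρM'.comp 0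
      rw [TensorProduct.map_zero_left]
      simp
    · intro i x _
      exact (ℳ' (i + n)).zero_mem
  add_mem' := fun {f g} hf hg => by
    constructor
    · show (TensorProduct.map (f + g) (LinearMap.id : A →ₗ[R] A)).comp ρM = ρM'.comp (f + g)
      rw [TensorProduct.map_add_left, LinearMap.add_comp, hf.1, hg.1, LinearMap.comp_add]
    · intro i x hx
      exact (ℳ' (i + n)).add_mem (hf.2 i x hx) (hg.2 i x hx)
  neg_mem' := fun {f} hf => by
    constructor
    · show (TensorProduct.map (-f) (LinearMap.id : A →ₗ[R] A)).comp ρM = ρM'.comp (-f)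
      rw [show -f = (-1 : R) • f from (neg_one_smul R f).symm,
        TensorProduct.map_smul_left, LinearMap.smul_comp, hf.1, LinearMap.comp_smul]
    · intro i x hx
      exact (ℳ' (i + n)).neg_mem (hf.2 i x hx)

end Defs

set_option maxHeartbeats 1000000
set_option synthInstance.maxHeartbeats 400000

section AuxAll
open DirectSum

section Aux
variable {R : Type*} [CommRing R]

/-- Additive projection onto the degree `i` component of a graded abelian group. -/
noncomputable def gproj {M : Type*} [AddCommGroup M] (ℳ : ℤ → AddSubgroup M)
    [DirectSum.Decomposition ℳ] (i : ℤ) : M →+ M :=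
  AddMonoidHom.mk' (fun x => (DirectSum.decompose ℳ x i : M)) (by
    intro a b; simp)

lemma gproj_apply {M : Type*} [AddCommGroup M] (ℳ : ℤ → AddSubgroup M)
    [DirectSum.Decomposition ℳ] (i : ℤ) (x : M) :
    gproj ℳ i x = (DirectSum.decompose ℳ x i : M) := rfl

lemma gproj_same {M : Type*} [AddCommGroup M] (ℳ : ℤ → AddSubgroup M)
    [DirectSum.Decomposition ℳ] {i : ℤ} {x : M} (hx : x ∈ ℳ i) : gproj ℳ i x = x :=
  DirectSum.decompose_of_mem_same ℳ hx

lemma gproj_ne {M : Type*} [AddCommGroup M] (ℳ : ℤ → AddSubgroup M)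
    [DirectSum.Decomposition ℳ] {i j : ℤ} {x : M} (hx : x ∈ ℳ j) (h : j ≠ i) :
    gproj ℳ i x = 0 :=
  DirectSum.decompose_of_mem_ne ℳ hx h

lemma gproj_mem {M : Type*} [AddCommGroup M] (ℳ : ℤ → AddSubgroup M)
    [DirectSum.Decomposition ℳ] (i : ℤ) (x : M) : gproj ℳ i x ∈ ℳ i :=
  SetLike.coe_mem _

/-- Projection commutes with homogeneous scalar multiplication, with a degree shift. -/
lemma gproj_smul {M : Type*} [AddCommGroup M] [Module R M]
    (𝒜 : ℤ → AddSubgroup R) (ℳ : ℤ → AddSubgroup M) [DirectSum.Decomposition ℳ]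
    (hsmul : ∀ (i j : ℤ) (r : R) (x : M), r ∈ 𝒜 i → x ∈ ℳ j → r • x ∈ ℳ (i + j))
    {d : ℤ} {r : R} (hr : r ∈ 𝒜 d) (i : ℤ) (y : M) :
    gproj ℳ (d + i) (r • y) = r • gproj ℳ i y := by
  induction y using DirectSum.Decomposition.inductionOn ℳ with
  | zero => simp
  | @homogeneous j x =>
    by_cases h : (j : ℤ) = i
    · subst h
      rw [gproj_same ℳ x.2, gproj_same ℳ (hsmul d j r x hr x.2)]
    · rw [gproj_ne ℳ x.2 h, gproj_ne ℳ (hsmul d j r x hr x.2) (fun hc => h (by omega)), smul_zero]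
  | add m m' hm hm' => rw [smul_add, map_add, map_add, hm, hm', smul_add]

end Aux

section Aux2
variable {R : Type*} [CommRing R]
variable {M : Type*} [AddCommGroup M] [Module R M] {M' : Type*} [AddCommGroup M'] [Module R M']
variable (ℳ : ℤ → AddSubgroup M) [DirectSum.Decomposition ℳ]
variable (ℳ' : ℤ → AddSubgroup M') [DirectSum.Decomposition ℳ']

/-- The degree-`n` homogeneous component of an additive map between graded groups. -/
noncomputable def compHom (n : ℤ) (g : M →+ M') : M →+ M' :=
  (DirectSum.toAddMonoid (fun i => ((gproj ℳ' (i + n)).comp g).comp (ℳ i).subtype)).comp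
    (DirectSum.decomposeAddEquiv ℳ).toAddMonoidHom

lemma compHom_of_mem (n : ℤ) (g : M →+ M') {i : ℤ} {x : M} (hx : x ∈ ℳ i) :
    compHom ℳ ℳ' n g x = gproj ℳ' (i + n) (g x) := by
  have h1 : (DirectSum.decomposeAddEquiv ℳ).toAddMonoidHom x
      = DirectSum.of (fun i => ℳ i) i ⟨x, hx⟩ := by
    show DirectSum.decompose ℳ x = _
    exact DirectSum.decompose_of_mem ℳ hx
  show (DirectSum.toAddMonoid _) ((DirectSum.decomposeAddEquiv ℳ).toAddMonoidHom x) = _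
  rw [h1, DirectSum.toAddMonoid_of]
  rfl

lemma compHom_mem (n : ℤ) (g : M →+ M') {i : ℤ} {x : M} (hx : x ∈ ℳ i) :
    compHom ℳ ℳ' n g x ∈ ℳ' (i + n) := by
  rw [compHom_of_mem ℳ ℳ' n g hx]; exact gproj_mem _ _ _

variable (𝒜 : ℤ → AddSubgroup R) [DirectSum.Decomposition 𝒜]

/-- The degree-`n` homogeneous component of a linear map between graded modules. -/
noncomputable def compLin
    (hMsmul : ∀ (i j : ℤ) (r : R) (x : M), r ∈ 𝒜 i → x ∈ ℳ j → r • x ∈ ℳ (i + j))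
    (hM'smul : ∀ (i j : ℤ) (r : R) (x : M'), r ∈ 𝒜 i → x ∈ ℳ' j → r • x ∈ ℳ' (i + j))
    (n : ℤ) (f : M →ₗ[R] M') : M →ₗ[R] M' :=
  { compHom ℳ ℳ' n f.toAddMonoidHom with
    map_smul' := by
      intro r x
      show compHom ℳ ℳ' n f.toAddMonoidHom (r • x) = r • compHom ℳ ℳ' n f.toAddMonoidHom x
      induction x using DirectSum.Decomposition.inductionOn ℳ with
      | zero => simp
      | @homogeneous i x =>
        induction r using DirectSum.Decomposition.inductionOn 𝒜 with
        | zero => simp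
        | @homogeneous d r =>
          rw [compHom_of_mem ℳ ℳ' n _ (hMsmul d i r x r.2 x.2),
            compHom_of_mem ℳ ℳ' n _ x.2]
          have h2 : f.toAddMonoidHom ((r : R) • (x : M)) = (r : R) • f.toAddMonoidHom (x : M) :=
            f.map_smul _ _
          rw [h2, show (d : ℤ) + i + n = d + (i + n) by ring,
            gproj_smul 𝒜 ℳ' hM'smul r.2 (i + n) _]
        | add r r' hr hr' =>
          rw [add_smul, map_add, hr, hr', add_smul]
      | add m m' hm hm' =>
        rw [smul_add, map_add, hm, hm', map_add, smul_add] }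

lemma compLin_apply
    (hMsmul : ∀ (i j : ℤ) (r : R) (x : M), r ∈ 𝒜 i → x ∈ ℳ j → r • x ∈ ℳ (i + j))
    (hM'smul : ∀ (i j : ℤ) (r : R) (x : M'), r ∈ 𝒜 i → x ∈ ℳ' j → r • x ∈ ℳ' (i + j))
    (n : ℤ) (f : M →ₗ[R] M') (x : M) :
    compLin ℳ ℳ' 𝒜 hMsmul hM'smul n f x = compHom ℳ ℳ' n f.toAddMonoidHom x := rfl

end Aux2

section Aux3
variable (R : Type*) [CommRing R]
variable {M' : Type*} [AddCommGroup M'] [Module R M'] {A : Type*} [AddCommGroup A] [Module R A]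
variable (ℳ' : ℤ → AddSubgroup M') [DirectSum.Decomposition ℳ']
variable (ℬ : ℤ → AddSubgroup A) [DirectSum.Decomposition ℬ]
variable (𝒜 : ℤ → AddSubgroup R) [DirectSum.Decomposition 𝒜]

/-- Degree-`k` component of the tensor grading on `M' ⊗[R] A`. -/
noncomputable def tpiece (k : ℤ) : AddSubgroup (M' ⊗[R] A) :=
  ⨆ p : ℤ × ℤ, ⨆ _ : p.1 + p.2 = k, tensorPiece R (ℳ' p.1) (ℬ p.2)

omit [DirectSum.Decomposition ℳ'] [DirectSum.Decomposition ℬ] in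
lemma mem_tpiece_of_piece {a b k : ℤ} (hab : a + b = k) {z : M' ⊗[R] A}
    (hz : z ∈ tensorPiece R (ℳ' a) (ℬ b)) : z ∈ tpiece R ℳ' ℬ k := by
  have h1 : tensorPiece R (ℳ' a) (ℬ b) ≤ tpiece R ℳ' ℬ k := by
    refine le_trans ?_ (le_iSup (fun p : ℤ × ℤ => ⨆ _ : p.1 + p.2 = k,
      tensorPiece R (ℳ' p.1) (ℬ p.2)) (a, b))
    exact le_iSup (fun _ : a + b = k => tensorPiece R (ℳ' a) (ℬ b)) hab
  exact h1 hz

omit [DirectSum.Decomposition ℳ'] [DirectSum.Decomposition ℬ] in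
lemma tensorPiece_tmul_mem {a b : ℤ} {x : M'} {y : A} (hx : x ∈ ℳ' a) (hy : y ∈ ℬ b) :
    x ⊗ₜ[R] y ∈ tensorPiece R (ℳ' a) (ℬ b) :=
  AddSubgroup.subset_closure ⟨x, hx, y, hy, rfl⟩

/-- The inner family of maps underlying the degree-`k` tensor projection. -/
noncomputable def tprojAuxInner (k i : ℤ) : ℳ' i →+ (A →+ M' ⊗[R] A) :=
  AddMonoidHom.mk' (fun x : ℳ' i =>
      ((TensorProduct.mk R M' A (x : M')).toAddMonoidHom).comp (gproj ℬ (k - i)))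
    (by intro a b; ext c; simp [TensorProduct.add_tmul])

/-- Biadditive, balanced map underlying the degree-`k` tensor projection. -/
noncomputable def tprojAux (k : ℤ) : M' →+ A →+ M' ⊗[R] A :=
  (DirectSum.toAddMonoid (fun i => tprojAuxInner R ℳ' ℬ k i)).comp
    (DirectSum.decomposeAddEquiv ℳ').toAddMonoidHom

lemma tprojAux_of_mem (k : ℤ) {i : ℤ} {x : M'} (hx : x ∈ ℳ' i) (a : A) :
    tprojAux R ℳ' ℬ k x a = x ⊗ₜ[R] gproj ℬ (k - i) a := by
  have h1 : (DirectSum.decomposeAddEquiv ℳ').toAddMonoidHom x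
      = DirectSum.of (fun i => ℳ' i) i ⟨x, hx⟩ := by
    show DirectSum.decompose ℳ' x = _
    exact DirectSum.decompose_of_mem ℳ' hx
  show (DirectSum.toAddMonoid (fun i => tprojAuxInner R ℳ' ℬ k i))
      ((DirectSum.decomposeAddEquiv ℳ').toAddMonoidHom x) a = _
  rw [h1, DirectSum.toAddMonoid_of]
  rfl

lemma tprojAux_of_mem_mem (k : ℤ) {i j : ℤ} {x : M'} {y : A} (hx : x ∈ ℳ' i) (hy : y ∈ ℬ j) :
    tprojAux R ℳ' ℬ k x y = if i + j = k then x ⊗ₜ[R] y else 0 := by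
  rw [tprojAux_of_mem R ℳ' ℬ k hx]
  by_cases h : i + j = k
  · rw [if_pos h, gproj_same ℬ (show y ∈ ℬ (k - i) by rwa [show k - i = j by omega])]
  · rw [if_neg h, gproj_ne ℬ hy (by omega), TensorProduct.tmul_zero]

/-- The additive projection of `M' ⊗[R] A` onto its degree-`k` graded piece. -/
noncomputable def tproj
    (hM'smul : ∀ (i j : ℤ) (r : R) (x : M'), r ∈ 𝒜 i → x ∈ ℳ' j → r • x ∈ ℳ' (i + j))
    (hAsmul : ∀ (i j : ℤ) (r : R) (a : A), r ∈ 𝒜 i → a ∈ ℬ j → r • a ∈ ℬ (i + j))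
    (k : ℤ) : M' ⊗[R] A →+ M' ⊗[R] A :=
  TensorProduct.liftAddHom (tprojAux R ℳ' ℬ k) (by
    intro r x a
    induction r using DirectSum.Decomposition.inductionOn 𝒜 with
    | zero => simp
    | @homogeneous d r =>
      induction x using DirectSum.Decomposition.inductionOn ℳ' with
      | zero => simp
      | @homogeneous i x =>
        rw [tprojAux_of_mem R ℳ' ℬ k (hM'smul d i r x r.2 x.2),
          tprojAux_of_mem R ℳ' ℬ k x.2,
          show k - (d + i) = k - d - i by ring,
          show k - i = d + (k - d - i) by ring,
          gproj_smul 𝒜 ℬ hAsmul r.2 (k - d - i) a,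
          TensorProduct.smul_tmul]
      | add m m' hm hm' =>
        rw [smul_add, map_add, map_add, AddMonoidHom.add_apply, AddMonoidHom.add_apply, hm, hm']
    | add r r' hr hr' =>
      rw [add_smul, add_smul, map_add, map_add, AddMonoidHom.add_apply, hr, hr'])

variable (hM'smul : ∀ (i j : ℤ) (r : R) (x : M'), r ∈ 𝒜 i → x ∈ ℳ' j → r • x ∈ ℳ' (i + j))
variable (hAsmul : ∀ (i j : ℤ) (r : R) (a : A), r ∈ 𝒜 i → a ∈ ℬ j → r • a ∈ ℬ (i + j))

lemma tproj_piece {a b k : ℤ} {z : M' ⊗[R] A} (hz : z ∈ tensorPiece R (ℳ' a) (ℬ b)) :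
    tproj R ℳ' ℬ 𝒜 hM'smul hAsmul k z = if a + b = k then z else 0 := by
  induction hz using AddSubgroup.closure_induction with
  | mem w hw =>
    obtain ⟨x, hx, y, hy, rfl⟩ := hw
    rw [show tproj R ℳ' ℬ 𝒜 hM'smul hAsmul k (x ⊗ₜ[R] y) = tprojAux R ℳ' ℬ k x y from
      TensorProduct.liftAddHom_tmul _ _ _ _]
    exact tprojAux_of_mem_mem R ℳ' ℬ k hx hy
  | zero => simp
  | add w w' _ _ hw hw' => rw [map_add, hw, hw']; split_ifs <;> simp
  | neg w _ hw => rw [map_neg, hw]; split_ifs <;> simp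

lemma tproj_tpiece {l k : ℤ} {z : M' ⊗[R] A} (hz : z ∈ tpiece R ℳ' ℬ l) :
    tproj R ℳ' ℬ 𝒜 hM'smul hAsmul k z = if l = k then z else 0 := by
  induction hz using AddSubgroup.iSup_induction' with
  | hp p z hz =>
    by_cases hp : p.1 + p.2 = l
    · rw [iSup_pos hp] at hz
      rw [tproj_piece R ℳ' ℬ 𝒜 hM'smul hAsmul hz, hp]
    · rw [iSup_neg hp] at hz
      rw [show z = 0 from AddSubgroup.mem_bot.mp hz]
      simp
  | h1 => simp
  | hadd w w' _ _ hw hw' => rw [map_add, hw, hw']; split_ifs <;> simp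

end Aux3

section Aux4
variable (R : Type*) [CommRing R]
variable {M : Type*} [AddCommGroup M] [Module R M]
variable {M' : Type*} [AddCommGroup M'] [Module R M']
variable {A : Type*} [AddCommGroup A] [Module R A]
variable (ℳ : ℤ → AddSubgroup M) (ℳ' : ℤ → AddSubgroup M') (ℬ : ℤ → AddSubgroup A)

lemma mapT_mem (g : M →ₗ[R] M') (n : ℤ) (hg : ∀ i : ℤ, ∀ x ∈ ℳ i, g x ∈ ℳ' (i + n))
    {i : ℤ} {z : M ⊗[R] A} (hz : z ∈ tpiece R ℳ ℬ i) :
    TensorProduct.map g LinearMap.id z ∈ tpiece R ℳ' ℬ (i + n) := by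
  induction hz using AddSubgroup.iSup_induction' with
  | hp p z hz =>
    by_cases hp2 : p.1 + p.2 = i
    · rw [iSup_pos hp2] at hz
      induction hz using AddSubgroup.closure_induction with
      | mem w hw =>
        obtain ⟨x, hx, y, hy, rfl⟩ := hw
        rw [TensorProduct.map_tmul]
        exact mem_tpiece_of_piece R ℳ' ℬ (show p.1 + n + p.2 = i + n by omega)
          (tensorPiece_tmul_mem R ℳ' ℬ (hg p.1 x hx) hy)
      | zero => rw [map_zero]; exact zero_mem _
      | add a b _ _ ha hb => rw [map_add]; exact add_mem ha hb
      | neg a _ ha => rw [map_neg]; exact neg_mem ha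
    · rw [iSup_neg hp2] at hz
      rw [show z = 0 from AddSubgroup.mem_bot.mp hz, map_zero]
      exact zero_mem _
  | h1 => rw [map_zero]; exact zero_mem _
  | hadd a b _ _ ha hb => rw [map_add]; exact add_mem ha hb

end Aux4

end AuxAll


/-!
Statement 0: Let `R` be a commutative noetherian `ℤ`-graded ring and `A` an `R`-Hopf algebra,
flat over `R`, equipped with a `ℤ`-grading compatible with that of `R` and for which all the
structure maps (multiplication, unit, comultiplication, counit, antipode) are homogeneous of
degree `0`.  Let `M`, `M'` be `ℤ`-graded `A`-comodules which are finitely generated over `R`.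
Then the natural map
`⊕_{n ∈ ℤ} Hom_{graded A-comod}(M, M'(n)) → Hom_{A-comod}(M, M')`
given by forgetting the gradings is an isomorphism of abelian groups: it is injective, and
its range is exactly the group of comodule morphisms `M → M'`.
-/

set_option maxHeartbeats 1000000 in
set_option synthInstance.maxHeartbeats 400000 in
theorem forget_grading_comodHom_bijective
    {R : Type*} [CommRing R] [IsNoetherianRing R]
    (𝒜 : ℤ → AddSubgroup R) [GradedRing 𝒜]
    {A : Type*} [Ring A] [HopfAlgebra R A] [Module.Flat R A]
    (ℬ : ℤ → AddSubgroup A) [DirectSum.Decomposition ℬ]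
    (hAsmul : ∀ (i j : ℤ) (r : R) (a : A), r ∈ 𝒜 i → a ∈ ℬ j → r • a ∈ ℬ (i + j))
    (hAmul : ∀ (i j : ℤ) (a b : A), a ∈ ℬ i → b ∈ ℬ j → a * b ∈ ℬ (i + j))
    (hAunit : ∀ (i : ℤ) (r : R), r ∈ 𝒜 i → algebraMap R A r ∈ ℬ i)
    (hAcomul : ∀ n : ℤ, ∀ a ∈ ℬ n, Coalgebra.comul (R := R) a ∈
      ⨆ p : ℤ × ℤ, ⨆ _ : p.1 + p.2 = n, tensorPiece R (ℬ p.1) (ℬ p.2))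
    (hAcounit : ∀ n : ℤ, ∀ a ∈ ℬ n, Coalgebra.counit (R := R) a ∈ 𝒜 n)
    (hAantipode : ∀ n : ℤ, ∀ a ∈ ℬ n, HopfAlgebra.antipode (R := R) a ∈ ℬ n)
    {M : Type*} [AddCommGroup M] [Module R M] [Module.Finite R M]
    {M' : Type*} [AddCommGroup M'] [Module R M'] [Module.Finite R M']
    (ρM : M →ₗ[R] M ⊗[R] A) (ρM' : M' →ₗ[R] M' ⊗[R] A)
    (hM : IsComoduleCoaction R ρM) (hM' : IsComoduleCoaction R ρM')
    (ℳ : ℤ → AddSubgroup M) [DirectSum.Decomposition ℳ]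
    (ℳ' : ℤ → AddSubgroup M') [DirectSum.Decomposition ℳ']
    (hMsmul : ∀ (i j : ℤ) (r : R) (x : M), r ∈ 𝒜 i → x ∈ ℳ j → r • x ∈ ℳ (i + j))
    (hM'smul : ∀ (i j : ℤ) (r : R) (x : M'), r ∈ 𝒜 i → x ∈ ℳ' j → r • x ∈ ℳ' (i + j))
    (hMcoact : ∀ n : ℤ, ∀ x ∈ ℳ n, ρM x ∈
      ⨆ p : ℤ × ℤ, ⨆ _ : p.1 + p.2 = n, tensorPiece R (ℳ p.1) (ℬ p.2))
    (hM'coact : ∀ n : ℤ, ∀ x ∈ ℳ' n, ρM' x ∈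
      ⨆ p : ℤ × ℤ, ⨆ _ : p.1 + p.2 = n, tensorPiece R (ℳ' p.1) (ℬ p.2)) :
    letI Φ : (DirectSum ℤ fun n : ℤ => ↥(homogComodHom R ρM ρM' ℳ ℳ' n)) →+ (M →ₗ[R] M') :=
      DirectSum.toAddMonoid (fun n => (homogComodHom R ρM ρM' ℳ ℳ' n).subtype)
    Function.Injective Φ ∧
      Set.range Φ = {f : M →ₗ[R] M' | IsComodMap R ρM ρM' f} := by
  classical
  set Φ : (DirectSum ℤ fun n : ℤ => ↥(homogComodHom R ρM ρM' ℳ ℳ' n)) →+ (M →ₗ[R] M') :=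
    DirectSum.toAddMonoid (fun n => (homogComodHom R ρM ρM' ℳ ℳ' n).subtype) with hΦ
  have hΦof : ∀ (n : ℤ) (x : ↥(homogComodHom R ρM ρM' ℳ ℳ' n)),
      Φ (DirectSum.of (fun n : ℤ => ↥(homogComodHom R ρM ρM' ℳ ℳ' n)) n x) = (x : M →ₗ[R] M') :=
    fun n x => by
      rw [hΦ]
      exact DirectSum.toAddMonoid_of (fun n => (homogComodHom R ρM ρM' ℳ ℳ' n).subtype) n x
  have hzero : IsComodMap R ρM ρM' (0 : M →ₗ[R] M') := by
    show (TensorProduct.map 0 (LinearMap.id : A →ₗ[R] A)).comp ρM = ρM'.comp 0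
    rw [TensorProduct.map_zero_left]; simp
  have hadd : ∀ f g : M →ₗ[R] M', IsComodMap R ρM ρM' f → IsComodMap R ρM ρM' g →
      IsComodMap R ρM ρM' (f + g) := by
    intro f g hf hg
    show (TensorProduct.map (f + g) (LinearMap.id : A →ₗ[R] A)).comp ρM = ρM'.comp (f + g)
    rw [TensorProduct.map_add_left, LinearMap.add_comp, hf, hg, LinearMap.comp_add]
  constructor
  · refine (injective_iff_map_eq_zero Φ).mpr ?_
    intro c hc
    have key : ∀ (n i : ℤ) (x : M), x ∈ ℳ i → (c n : M →ₗ[R] M') x = 0 := by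
      intro n i x hx
      by_cases hn : n ∈ DFinsupp.support c
      · have e1 : c = ∑ m ∈ DFinsupp.support c,
            DirectSum.of (fun n : ℤ => ↥(homogComodHom R ρM ρM' ℳ ℳ' n)) m (c m) :=
          (DirectSum.sum_support_of c).symm
        have hc2 : (0 : M') = ∑ m ∈ DFinsupp.support c, (c m : M →ₗ[R] M') x := by
          calc (0 : M') = Φ c x := by rw [hc]; rfl
            _ = ∑ m ∈ DFinsupp.support c, (c m : M →ₗ[R] M') x := by
                conv_lhs => rw [e1]
                rw [map_sum, LinearMap.sum_apply]
                exact Finset.sum_congr rfl fun m _ => by rw [hΦof]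
        have hc3 := congrArg (gproj ℳ' (i + n)) hc2
        have e2 : ∑ m ∈ DFinsupp.support c, gproj ℳ' (i + n) ((c m : M →ₗ[R] M') x)
            = (c n : M →ₗ[R] M') x :=
          (Finset.sum_eq_single (s := DFinsupp.support c)
            (f := fun m => gproj ℳ' (i + n) ((c m : M →ₗ[R] M') x)) n
            (fun m _ hm => gproj_ne ℳ' ((c m).2.2 i x hx) (by omega))
            (fun hn' => absurd hn hn')).trans (gproj_same ℳ' ((c n).2.2 i x hx))
        rw [map_zero, map_sum] at hc3
        exact (hc3.trans e2).symm
      · rw [DFinsupp.notMem_support_iff.mp hn]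
        simp
    have hcomp : ∀ n : ℤ, ((c n : M →ₗ[R] M')) = 0 := by
      intro n
      refine LinearMap.ext fun x => ?_
      induction x using DirectSum.Decomposition.inductionOn ℳ with
      | zero => simp
      | @homogeneous i x => rw [key n i x x.2]; simp
      | add a b ha hb => simp only [map_add, ha, hb, LinearMap.zero_apply, add_zero]
    exact DFinsupp.ext fun n => Subtype.ext (hcomp n)
  · apply Set.Subset.antisymm
    · rintro f ⟨c, rfl⟩
      show IsComodMap R ρM ρM' (Φ c)
      induction c using DirectSum.induction_on with
      | zero => rw [map_zero]; exact hzero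
      | of n x => rw [hΦof]; exact x.2.1
      | add a b ha hb => rw [map_add]; exact hadd _ _ ha hb
    · intro f hf
      have hf' : IsComodMap R ρM ρM' f := hf
      obtain ⟨t, ht⟩ := Module.Finite.fg_top (R := R) (M := M)
      set S : Finset ℤ := t.biUnion (fun x => (DirectSum.decompose ℳ x).support.biUnion
        (fun i => (DirectSum.decompose ℳ' (f ((DirectSum.decompose ℳ x i : M)))).support.image
          (fun j => j - i))) with hS
      set g : ℤ → (M →ₗ[R] M') := fun n => compLin ℳ ℳ' 𝒜 hMsmul hM'smul n f with hg
      have hghom : ∀ (n i : ℤ) (x : M), x ∈ ℳ i → g n x ∈ ℳ' (i + n) :=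
        fun n i x hx => compHom_mem ℳ ℳ' n f.toAddMonoidHom hx
      have hgmem : ∀ (n i : ℤ) (x : M), x ∈ ℳ i → g n x = gproj ℳ' (i + n) (f x) :=
        fun n i x hx => compHom_of_mem ℳ ℳ' n f.toAddMonoidHom hx
      have hn_of_support : ∀ x ∈ t, ∀ i ∈ (DirectSum.decompose ℳ x).support,
          ∀ j ∈ (DirectSum.decompose ℳ' (f ((DirectSum.decompose ℳ x i : M)))).support,
          j - i ∈ S := by
        intro x hx i hi j hj
        exact Finset.mem_biUnion.mpr ⟨x, hx, Finset.mem_biUnion.mpr ⟨i, hi,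
          Finset.mem_image.mpr ⟨j, hj, rfl⟩⟩⟩
      have hBsum : (∑ n ∈ S, g n) = f := by
        apply LinearMap.ext_on ht
        intro x hx
        rw [LinearMap.sum_apply]
        have step1 : ∀ n : ℤ, g n x = ∑ i ∈ (DirectSum.decompose ℳ x).support,
            gproj ℳ' (i + n) (f ((DirectSum.decompose ℳ x i : M))) := by
          intro n
          conv_lhs => rw [← DirectSum.sum_support_decompose ℳ x]
          rw [map_sum]
          exact Finset.sum_congr rfl fun i _ => hgmem n i _ (SetLike.coe_mem _)
        calc ∑ n ∈ S, g n x
            = ∑ n ∈ S, ∑ i ∈ (DirectSum.decompose ℳ x).support,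
              gproj ℳ' (i + n) (f ((DirectSum.decompose ℳ x i : M))) :=
              Finset.sum_congr rfl fun n _ => step1 n
          _ = ∑ i ∈ (DirectSum.decompose ℳ x).support, ∑ n ∈ S,
              gproj ℳ' (i + n) (f ((DirectSum.decompose ℳ x i : M))) := Finset.sum_comm
          _ = ∑ i ∈ (DirectSum.decompose ℳ x).support,
              f ((DirectSum.decompose ℳ x i : M)) := ?_
          _ = f x := by rw [← map_sum, DirectSum.sum_support_decompose]
        refine Finset.sum_congr rfl fun i hi => ?_
        have hsub : (DirectSum.decompose ℳ' (f ((DirectSum.decompose ℳ x i : M)))).support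
            ⊆ S.image (fun n => i + n) := by
          intro j hj
          exact Finset.mem_image.mpr ⟨j - i, hn_of_support x hx i hi j hj, by omega⟩
        have hzero' : ∀ j ∈ S.image (fun n => i + n),
            j ∉ (DirectSum.decompose ℳ' (f ((DirectSum.decompose ℳ x i : M)))).support →
            gproj ℳ' j (f ((DirectSum.decompose ℳ x i : M))) = 0 := by
          intro j _ hj
          rw [gproj_apply, DFinsupp.notMem_support_iff.mp hj, ZeroMemClass.coe_zero]
        have himg : ∑ n ∈ S, gproj ℳ' (i + n) (f ((DirectSum.decompose ℳ x i : M)))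
            = ∑ j ∈ S.image (fun n => i + n), gproj ℳ' j (f ((DirectSum.decompose ℳ x i : M))) :=
          (Finset.sum_image (s := S) (g := fun n => i + n)
            (f := fun j => gproj ℳ' j (f ((DirectSum.decompose ℳ x i : M))))
            (fun a _ b _ h => by
              have h' : i + a = i + b := h
              omega)).symm
        rw [himg, ← Finset.sum_subset hsub hzero']
        exact DirectSum.sum_support_decompose ℳ' _
      have hmapsum : ∀ (T : Finset ℤ) (z : M ⊗[R] A), TensorProduct.map (∑ m ∈ T, g m)
          (LinearMap.id : A →ₗ[R] A) z = ∑ m ∈ T, TensorProduct.map (g m) LinearMap.id z := by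
        intro T z
        induction T using Finset.induction_on with
        | empty =>
          rw [Finset.sum_empty, Finset.sum_empty, TensorProduct.map_zero_left]
          rfl
        | @insert a T ha ih =>
          rw [Finset.sum_insert ha, Finset.sum_insert ha, TensorProduct.map_add_left,
            LinearMap.add_apply, ih]
      have hC : ∀ n ∈ S, IsComodMap R ρM ρM' (g n) := by
        intro n hn
        have hDx : ∀ x : M, TensorProduct.map (g n) (LinearMap.id : A →ₗ[R] A) (ρM x)
            - ρM' (g n x) = 0 := by
          have key : ∀ (i : ℤ) (x : M), x ∈ ℳ i →
              TensorProduct.map (g n) (LinearMap.id : A →ₗ[R] A) (ρM x) - ρM' (g n x) = 0 := by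
            intro i x hx
            have hsum0 : ∑ m ∈ S, (TensorProduct.map (g m) (LinearMap.id : A →ₗ[R] A) (ρM x)
                - ρM' (g m x)) = 0 := by
              have h2 : TensorProduct.map f (LinearMap.id : A →ₗ[R] A) (ρM x) = ρM' (f x) := by
                have := LinearMap.congr_fun hf' x
                simpa using this
              rw [Finset.sum_sub_distrib, ← hmapsum S (ρM x), ← map_sum, ← LinearMap.sum_apply,
                hBsum, h2, sub_self]
            have hmem : ∀ m ∈ S, (TensorProduct.map (g m) (LinearMap.id : A →ₗ[R] A) (ρM x)
                - ρM' (g m x)) ∈ tpiece R ℳ' ℬ (i + m) := by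
              intro m _
              refine sub_mem ?_ ?_
              · exact mapT_mem R ℳ ℳ' ℬ (g m) m (fun i' x' hx' => hghom m i' x' hx')
                  (hMcoact i x hx)
              · exact hM'coact (i + m) _ (hghom m i x hx)
            have hthis := congrArg (tproj R ℳ' ℬ 𝒜 hM'smul hAsmul (i + n)) hsum0
            rw [map_zero, map_sum] at hthis
            have e3 := Finset.sum_eq_single (s := S)
              (f := fun m => tproj R ℳ' ℬ 𝒜 hM'smul hAsmul (i + n)
                (TensorProduct.map (g m) (LinearMap.id : A →ₗ[R] A) (ρM x) - ρM' (g m x))) n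
              (fun m hm hmn => by
                show tproj R ℳ' ℬ 𝒜 hM'smul hAsmul (i + n)
                  (TensorProduct.map (g m) (LinearMap.id : A →ₗ[R] A) (ρM x) - ρM' (g m x)) = 0
                rw [tproj_tpiece R ℳ' ℬ 𝒜 hM'smul hAsmul (hmem m hm), if_neg (by omega)])
              (fun hn' => absurd hn hn')
            have e4 : tproj R ℳ' ℬ 𝒜 hM'smul hAsmul (i + n)
                (TensorProduct.map (g n) (LinearMap.id : A →ₗ[R] A) (ρM x) - ρM' (g n x))
                = TensorProduct.map (g n) (LinearMap.id : A →ₗ[R] A) (ρM x) - ρM' (g n x) := by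
              rw [tproj_tpiece R ℳ' ℬ 𝒜 hM'smul hAsmul (hmem n hn), if_pos rfl]
            exact e4.symm.trans (e3.symm.trans hthis)
          intro x
          induction x using DirectSum.Decomposition.inductionOn ℳ with
          | zero => simp
          | @homogeneous i x => exact key i x x.2
          | add a b ha hb =>
            simp only [map_add]
            rw [add_sub_add_comm, ha, hb, add_zero]
        show (TensorProduct.map (g n) (LinearMap.id : A →ₗ[R] A)).comp ρM = ρM'.comp (g n)
        refine LinearMap.ext fun x => ?_
        have h4 := hDx x
        rw [sub_eq_zero] at h4
        simpa using h4
      refine ⟨∑ n ∈ S.attach, DirectSum.of (fun n : ℤ => ↥(homogComodHom R ρM ρM' ℳ ℳ' n))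
        n.1 ⟨g n.1, hC n.1 n.2, fun i x hx => hghom n.1 i x hx⟩, ?_⟩
      rw [map_sum]
      simp only [hΦof]
      rw [Finset.sum_attach S (fun n => g n)]
      exact hBsum
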